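/- Let α ∈ [0,1], ρ > 0, and let a₀(n), a₁(n) be real sequences with (a₀(n)) bounded and 2a₀(n)+a₁(n) = 1 for all n. Then there exists a constant C₃ > 0 (independent of n and of f) such that for every 0 < τ ≤ 1, every L > 0 and every function f : [0,1] → ℝ satisfying the Lipschitz condition |f(x₁) − f(x₂)| ≤ L|x₁−x₂|^τ for all x₁, x₂ ∈ [0,1], one has, for every n ≥ 2 and every x ∈ [0,1], |J_{n,α,ρ}^{M,1}(f;x) − f(x)| ≤ L·C₃·(1 + 3|a₀(n)|)·n^{−τ/2}. -/

import Mathlib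

open MeasureTheory Finset Filter

noncomputable def bin (m : ℕ) (j : ℤ) : ℝ :=
  if 0 ≤ j ∧ j ≤ (m : ℤ) then (m.choose j.toNat : ℝ) else 0

/-- The α-Bernstein basis polynomial `p_{n,k}^α(x)` (with `k : ℤ`, vanishing out of range). -/
noncomputable def bp (α : ℝ) (n : ℕ) (k : ℤ) (x : ℝ) : ℝ :=
  if n = 1 then (if k = 0 then 1 - x else if k = 1 then x else 0)
  else
    (1 - α) * (bin (n - 2) k * x ^ k.toNat * (1 - x) ^ (n - 1 - k.toNat)
      + bin (n - 2) (k - 2) * x ^ (k.toNat - 1) * (1 - x) ^ (n - k.toNat))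
    + α * bin n k * x ^ k.toNat * (1 - x) ^ (n - k.toNat)

/-- Euler Beta function. -/
noncomputable def betaFn (a b : ℝ) : ℝ := Real.Gamma a * Real.Gamma b / Real.Gamma (a + b)

/-- The Pălțănea kernel `μ_{n,k}^ρ(t)`. -/
noncomputable def pal (ρ : ℝ) (n k : ℕ) (t : ℝ) : ℝ :=
  t ^ ((k : ℝ) * ρ) * (1 - t) ^ (((n : ℝ) - (k : ℝ)) * ρ)
    / betaFn ((k : ℝ) * ρ + 1) (((n : ℝ) - (k : ℝ)) * ρ + 1)

/-- First-order modified α-Bernstein–Pălțănea operator `J_{n,α,ρ}^{M,1}(f;x)`. -/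
noncomputable def J1 (α ρ : ℝ) (a0 a1 : ℕ → ℝ) (n : ℕ) (f : ℝ → ℝ) (x : ℝ) : ℝ :=
  ∑ k ∈ Finset.range (n + 1),
    ((a1 n * x + a0 n) * bp α (n - 1) (k : ℤ) x
      + (a1 n * (1 - x) + a0 n) * bp α (n - 1) ((k : ℤ) - 1) x)
    * ∫ t in (0:ℝ)..1, pal ρ n k t * f t

noncomputable def bb (M k : ℕ) (x : ℝ) : ℝ := (M.choose k : ℝ) * x^k * (1-x)^(M-k)

lemma betaFn_pos {a b : ℝ} (ha : 0 < a) (hb : 0 < b) : 0 < betaFn a b := by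
  unfold betaFn
  exact div_pos (mul_pos (Real.Gamma_pos_of_pos ha) (Real.Gamma_pos_of_pos hb))
    (Real.Gamma_pos_of_pos (by linarith))

lemma beta_integral {a b : ℝ} (ha : 0 < a) (hb : 0 < b) :
    ∫ t in (0:ℝ)..1, t ^ (a - 1) * (1 - t) ^ (b - 1) = betaFn a b := by
  have h := Complex.Gamma_mul_Gamma_eq_betaIntegral (s := (a:ℂ)) (t := (b:ℂ))
    (by simpa using ha) (by simpa using hb)
  have h2 : Complex.betaIntegral (a:ℂ) (b:ℂ)
      = ((∫ t in (0:ℝ)..1, t ^ (a - 1) * (1 - t) ^ (b - 1) : ℝ) : ℂ) := by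
    rw [Complex.betaIntegral, ← intervalIntegral.integral_ofReal]
    apply intervalIntegral.integral_congr
    intro t ht
    rw [Set.uIcc_of_le (by norm_num : (0:ℝ) ≤ 1)] at ht
    show (t:ℂ) ^ ((a:ℂ) - 1) * (1 - (t:ℂ)) ^ ((b:ℂ) - 1) = ((t ^ (a - 1) * (1 - t) ^ (b - 1) : ℝ) : ℂ)
    rw [Complex.ofReal_mul, Complex.ofReal_cpow ht.1 (a-1),
      Complex.ofReal_cpow (by linarith [ht.2] : (0:ℝ) ≤ 1 - t) (b-1)]
    push_cast
    ring_nf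
  rw [h2, ← Complex.ofReal_add, Complex.Gamma_ofReal, Complex.Gamma_ofReal, Complex.Gamma_ofReal,
    ← Complex.ofReal_mul, ← Complex.ofReal_mul] at h
  have h4 := Complex.ofReal_injective h
  have hG : Real.Gamma (a + b) ≠ 0 := (Real.Gamma_pos_of_pos (by linarith)).ne'
  unfold betaFn
  field_simp
  linarith [h4]

lemma betaFn_succ {a b : ℝ} (ha : 0 < a) (hb : 0 < b) :
    betaFn (a + 1) b = (a / (a + b)) * betaFn a b := by
  unfold betaFn
  rw [Real.Gamma_add_one ha.ne', show a + 1 + b = (a + b) + 1 by ring,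
    Real.Gamma_add_one (by positivity)]
  have h1 : Real.Gamma (a+b) ≠ 0 := (Real.Gamma_pos_of_pos (by linarith)).ne'
  field_simp

lemma rpow_contOn {c : ℝ} (hc : 0 ≤ c) : ContinuousOn (fun t : ℝ => t ^ c) (Set.Icc 0 1) :=
  fun t _ => (Real.continuousAt_rpow_const t c (Or.inr hc)).continuousWithinAt

lemma pal_contOn {ρ : ℝ} (hρ : 0 < ρ) {n k : ℕ} (hk : k ≤ n) :
    ContinuousOn (pal ρ n k) (Set.Icc 0 1) := by
  have e1 : (0:ℝ) ≤ (k:ℝ) * ρ := by positivity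
  have e2 : (0:ℝ) ≤ ((n:ℝ) - (k:ℝ)) * ρ := by
    have : (k:ℝ) ≤ n := by exact_mod_cast hk
    nlinarith
  unfold pal
  apply ContinuousOn.div_const
  apply ContinuousOn.mul (rpow_contOn e1)
  have : ContinuousOn (fun t : ℝ => 1 - t) (Set.Icc (0:ℝ) 1) := by fun_prop
  exact (rpow_contOn e2).comp this (fun t ht => ⟨by linarith [ht.2], by linarith [ht.1]⟩)

lemma pal_nonneg {ρ : ℝ} (hρ : 0 < ρ) {n k : ℕ} (hk : k ≤ n) {t : ℝ}
    (ht : t ∈ Set.Icc (0:ℝ) 1) : 0 ≤ pal ρ n k t := by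
  have hA : (0:ℝ) < (k:ℝ) * ρ + 1 := by positivity
  have hB : (0:ℝ) < ((n:ℝ) - (k:ℝ)) * ρ + 1 := by
    have : (k:ℝ) ≤ n := by exact_mod_cast hk
    nlinarith
  unfold pal
  apply div_nonneg _ (betaFn_pos hA hB).le
  exact mul_nonneg (Real.rpow_nonneg ht.1 _) (Real.rpow_nonneg (by linarith [ht.2]) _)

section moments

lemma pal_int0 {ρ : ℝ} (hρ : 0 < ρ) {n k : ℕ} (hk : k ≤ n) : ∫ t in (0:ℝ)..1, pal ρ n k t = 1 := by
  have hkn : (k:ℝ) ≤ n := by exact_mod_cast hk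
  have hA : (0:ℝ) < (k:ℝ) * ρ + 1 := by nlinarith [mul_nonneg (Nat.cast_nonneg (α := ℝ) k) hρ.le]
  have hB : (0:ℝ) < ((n:ℝ) - (k:ℝ)) * ρ + 1 := by nlinarith
  unfold pal
  rw [intervalIntegral.integral_div]
  rw [show ∫ t in (0:ℝ)..1, t ^ ((k:ℝ) * ρ) * (1 - t) ^ (((n:ℝ) - (k:ℝ)) * ρ)
      = ∫ t in (0:ℝ)..1, t ^ (((k:ℝ) * ρ + 1) - 1) * (1 - t) ^ ((((n:ℝ) - (k:ℝ)) * ρ + 1) - 1) by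
    norm_num]
  rw [beta_integral hA hB, div_self (betaFn_pos hA hB).ne']

lemma pal_int1 {ρ : ℝ} (hρ : 0 < ρ) {n k : ℕ} (hk : k ≤ n) : ∫ t in (0:ℝ)..1, pal ρ n k t * t
    = ((k:ℝ) * ρ + 1) / ((n:ℝ) * ρ + 2) := by
  have hkn : (k:ℝ) ≤ n := by exact_mod_cast hk
  have hA : (0:ℝ) < (k:ℝ) * ρ + 1 := by nlinarith [mul_nonneg (Nat.cast_nonneg (α := ℝ) k) hρ.le]
  have hB : (0:ℝ) < ((n:ℝ) - (k:ℝ)) * ρ + 1 := by nlinarith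
  have key : ∀ t ∈ Set.uIcc (0:ℝ) 1, pal ρ n k t * t
      = t ^ ((((k:ℝ) * ρ + 1) + 1) - 1) * (1 - t) ^ ((((n:ℝ) - (k:ℝ)) * ρ + 1) - 1)
        / betaFn ((k:ℝ) * ρ + 1) (((n:ℝ) - (k:ℝ)) * ρ + 1) := by
    intro t ht
    rw [Set.uIcc_of_le (by norm_num : (0:ℝ) ≤ 1)] at ht
    unfold pal
    rw [show (((k:ℝ) * ρ + 1) + 1) - 1 = (k:ℝ)*ρ + 1 by ring,
      Real.rpow_add' ht.1 hA.ne', Real.rpow_one]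
    ring_nf
  rw [intervalIntegral.integral_congr key, intervalIntegral.integral_div,
    beta_integral (by linarith) hB, betaFn_succ hA hB,
    mul_div_assoc, div_self (betaFn_pos hA hB).ne']
  have : (k:ℝ) * ρ + 1 + (((n:ℝ) - (k:ℝ)) * ρ + 1) = (n:ℝ) * ρ + 2 := by ring
  rw [this, mul_one]

lemma pal_int2 {ρ : ℝ} (hρ : 0 < ρ) {n k : ℕ} (hk : k ≤ n) : ∫ t in (0:ℝ)..1, pal ρ n k t * t ^ 2
    = ((k:ℝ) * ρ + 1) * ((k:ℝ) * ρ + 2) / (((n:ℝ) * ρ + 2) * ((n:ℝ) * ρ + 3)) := by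
  have hkn : (k:ℝ) ≤ n := by exact_mod_cast hk
  have hA : (0:ℝ) < (k:ℝ) * ρ + 1 := by nlinarith [mul_nonneg (Nat.cast_nonneg (α := ℝ) k) hρ.le]
  have hB : (0:ℝ) < ((n:ℝ) - (k:ℝ)) * ρ + 1 := by nlinarith
  have key : ∀ t ∈ Set.uIcc (0:ℝ) 1, pal ρ n k t * t ^ 2
      = t ^ (((((k:ℝ) * ρ + 1) + 1) + 1) - 1) * (1 - t) ^ ((((n:ℝ) - (k:ℝ)) * ρ + 1) - 1)
        / betaFn ((k:ℝ) * ρ + 1) (((n:ℝ) - (k:ℝ)) * ρ + 1) := by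
    intro t ht
    rw [Set.uIcc_of_le (by norm_num : (0:ℝ) ≤ 1)] at ht
    unfold pal
    rw [show ((((k:ℝ) * ρ + 1) + 1) + 1) - 1 = (k:ℝ)*ρ + 2 by ring,
      Real.rpow_add' ht.1 (by nlinarith [mul_nonneg (Nat.cast_nonneg (α := ℝ) k) hρ.le] : (k:ℝ)*ρ + 2 ≠ 0),
      show ((2:ℝ)) = ((2:ℕ):ℝ) by norm_num, Real.rpow_natCast]
    ring_nf
  rw [intervalIntegral.integral_congr key, intervalIntegral.integral_div,
    beta_integral (by linarith) hB,
    show ((k:ℝ) * ρ + 1) + 1 + 1 = ((k:ℝ) * ρ + 1 + 1) + 1 by ring,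
    betaFn_succ (by linarith) hB, betaFn_succ hA hB]
  have h1 : (k:ℝ) * ρ + 1 + (((n:ℝ) - (k:ℝ)) * ρ + 1) = (n:ℝ) * ρ + 2 := by ring
  have h2 : (k:ℝ) * ρ + 1 + 1 + (((n:ℝ) - (k:ℝ)) * ρ + 1) = (n:ℝ) * ρ + 3 := by ring
  rw [h1, h2]
  have hβ := (betaFn_pos hA hB).ne'
  rw [mul_div_assoc, mul_div_assoc, div_mul_eq_mul_div, mul_div_assoc,
    div_self hβ, mul_one]
  field_simp
  ring

end moments

set_option maxHeartbeats 1000000 in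
lemma arith_key {ρ N K x : ℝ} (hρ : 0 < ρ) (hN : 2 ≤ N) (hK0 : 0 ≤ K) (hKN : K ≤ N) :
    (K*ρ+1)*(K*ρ+2)/((N*ρ+2)*(N*ρ+3)) - 2*x*((K*ρ+1)/(N*ρ+2)) + x^2*1
      ≤ 2*(x - K/N)^2 + (2/ρ^2 + 1/ρ)/N := by
  obtain ⟨S, hSdef⟩ : ∃ S : ℝ, S = N * ρ + 2 := ⟨_, rfl⟩
  obtain ⟨A, hAdef⟩ : ∃ A : ℝ, A = K * ρ + 1 := ⟨_, rfl⟩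
  have hNpos : (0:ℝ) < N := by linarith
  have hS : 0 < S := by nlinarith
  have hA : 0 < A := by nlinarith
  have hSA : 0 < S - A := by nlinarith
  have hS1 : 0 < S + 1 := by linarith
  have e0 : N * ρ + 3 = S + 1 := by rw [hSdef]; ring
  have e05 : K * ρ + 2 = A + 1 := by rw [hAdef]; ring
  rw [← hAdef, ← hSdef, e0, e05]
  have e1 : A * (A + 1) / (S * (S + 1)) - 2 * x * (A / S) + x ^ 2 * 1
      = (x - A/S)^2 + A*(S-A)/(S^2*(S+1)) := by
    field_simp
    ring
  rw [e1]
  have e2 : A*(S-A)/(S^2*(S+1)) ≤ 1/(ρ*N) := by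
    rw [div_le_div_iff₀ (by positivity) (by positivity)]
    have h4 : A*(S-A) ≤ S^2/4 := by nlinarith [sq_nonneg (S - 2*A)]
    have h5 : ρ*N ≤ S+1 := by nlinarith
    nlinarith [mul_le_mul h4 h5 (by positivity) (by positivity),
      mul_nonneg (mul_nonneg (sq_nonneg S) hS1.le) hS.le,
      mul_nonneg (sq_nonneg S) hS1.le]
  have hd : A/S - K/N = (N - 2*K)/(N*S) := by
    rw [hAdef, hSdef]
    field_simp
    ring
  have habs : (A/S - K/N)^2 ≤ 1/(ρ^2*N) := by
    rw [hd, div_pow, div_le_div_iff₀ (by positivity) (by positivity)]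
    have h7 : (N-2*K)^2 ≤ N^2 := by nlinarith
    have h8 : N^2*ρ^2 ≤ S^2 := by nlinarith
    have h9 : (N-2*K)^2 * (ρ^2*N) ≤ N^2 * (ρ^2*N) :=
      mul_le_mul_of_nonneg_right h7 (by positivity)
    have h10 : N^2 * (N^2*ρ^2) ≤ N^2 * S^2 := mul_le_mul_of_nonneg_left h8 (by positivity)
    have h11 : N^2 * (ρ^2*N) ≤ N^2 * (N^2 * ρ^2) := by
      nlinarith [mul_nonneg (mul_nonneg (sq_nonneg (N*ρ)) hNpos.le) (by linarith : (0:ℝ) ≤ N - 1)]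
    calc (N-2*K)^2 * (ρ^2*N) ≤ N^2 * (ρ^2*N) := h9
      _ ≤ N^2 * (N^2*ρ^2) := h11
      _ ≤ N^2 * S^2 := h10
      _ = 1 * (N*S)^2 := by ring
  have e3 : (x - A/S)^2 ≤ 2*(x - K/N)^2 + 2/(ρ^2*N) := by
    have step1 : (x - A/S)^2 = ((x-K/N) - (A/S-K/N))^2 := by ring
    have step2 : ((x-K/N) - (A/S-K/N))^2 ≤ 2*(x-K/N)^2 + 2*(A/S-K/N)^2 := by
      nlinarith [sq_nonneg ((x-K/N) + (A/S-K/N))]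
    have step3 : 2*(A/S-K/N)^2 ≤ 2/(ρ^2*N) := by
      rw [show (2:ℝ)/(ρ^2*N) = 2*(1/(ρ^2*N)) by ring]
      linarith [habs]
    linarith
  have e4 : (2/ρ^2 + 1/ρ)/N = 2/(ρ^2*N) + 1/(ρ*N) := by field_simp
  rw [e4]
  linarith

lemma bb_eval (M k : ℕ) (x : ℝ) : (bernsteinPolynomial ℝ M k).eval x = bb M k x := by
  simp [bernsteinPolynomial, bb]

lemma bb_nonneg {M k : ℕ} {x : ℝ} (hx : x ∈ Set.Icc (0:ℝ) 1) : 0 ≤ bb M k x := by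
  have h1 : (0:ℝ) ≤ 1 - x := by linarith [hx.2]
  exact mul_nonneg (mul_nonneg (Nat.cast_nonneg _) (pow_nonneg hx.1 _)) (pow_nonneg h1 _)

lemma bb_sum (M : ℕ) (x : ℝ) : ∑ k ∈ Finset.range (M+1), bb M k x = 1 := by
  have h := congrArg (Polynomial.eval x) (bernsteinPolynomial.sum ℝ M)
  simpa [Polynomial.eval_finset_sum, bb_eval] using h

lemma bb_sum1 (M : ℕ) (x : ℝ) :
    ∑ k ∈ Finset.range (M+1), (k:ℝ) * bb M k x = M * x := by
  have h := congrArg (Polynomial.eval x) (bernsteinPolynomial.sum_smul ℝ M)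
  simpa [Polynomial.eval_finset_sum, bb_eval] using h

lemma bb_sum2 (M : ℕ) (x : ℝ) :
    ∑ k ∈ Finset.range (M+1), ((k:ℝ) * ((k:ℝ) - 1)) * bb M k x = M * (M - 1) * x^2 := by
  have h := congrArg (Polynomial.eval x) (bernsteinPolynomial.sum_mul_smul ℝ M)
  simp only [Polynomial.eval_finset_sum, Polynomial.eval_smul, smul_eq_mul,
    Polynomial.eval_mul, Polynomial.eval_pow, Polynomial.eval_X, bb_eval,
    Polynomial.eval_natCast, nsmul_eq_mul] at h
  have cast_eq : ∀ j : ℕ, ((j * (j-1) : ℕ) : ℝ) = (j:ℝ) * ((j:ℝ) - 1) := by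
    intro j
    rcases Nat.eq_zero_or_pos j with h0 | h0
    · subst h0; simp
    · push_cast [Nat.cast_sub h0]
      ring
  rw [cast_eq] at h
  rw [← h]
  exact Finset.sum_congr rfl fun k _ => by rw [cast_eq]

lemma bb_var (M : ℕ) (x : ℝ) (c : ℝ) :
    ∑ k ∈ Finset.range (M+1), bb M k x * (c - (k:ℝ))^2
      = (c - M*x)^2 + M*x*(1-x) := by
  have h0 := bb_sum M x
  have h1 := bb_sum1 M x
  have h2 := bb_sum2 M x
  have expand : ∀ k : ℕ, bb M k x * (c - (k:ℝ))^2
      = c^2 * bb M k x - 2*c*((k:ℝ)*bb M k x)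
        + (((k:ℝ)*((k:ℝ)-1))*bb M k x + (k:ℝ)*bb M k x) := fun k => by ring
  rw [Finset.sum_congr rfl fun k _ => expand k]
  rw [Finset.sum_add_distrib, Finset.sum_sub_distrib, Finset.sum_add_distrib,
    ← Finset.mul_sum, ← Finset.mul_sum, h0, h1, h2]
  ring

lemma bin_nat {M j : ℕ} (h : j ≤ M) : bin M (j:ℤ) = (M.choose j : ℝ) := by
  have : (0:ℤ) ≤ (j:ℤ) ∧ (j:ℤ) ≤ (M:ℤ) := ⟨Int.natCast_nonneg j, by exact_mod_cast h⟩
  simp [bin, this]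

lemma bin_zero {M : ℕ} {j : ℤ} (h : ¬(0 ≤ j ∧ j ≤ (M:ℤ))) : bin M j = 0 := by
  simp [bin, h]

lemma bin_nonneg (M : ℕ) (j : ℤ) : 0 ≤ bin M j := by
  unfold bin; split <;> positivity

-- the three partial sums, for a generic weight w
lemma sumA {m : ℕ} (hm : 2 ≤ m) (x : ℝ) (w : ℕ → ℝ) :
    ∑ k ∈ Finset.range (m+2), bin (m-2) (k:ℤ) * x ^ k * (1-x) ^ (m-1-k) * w k
      = (1-x) * ∑ k ∈ Finset.range (m-1), bb (m-2) k x * w k := by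
  rw [Finset.mul_sum]
  rw [← Finset.sum_subset (Finset.range_subset_range.mpr (by omega : m-1 ≤ m+2))]
  · apply Finset.sum_congr rfl
    intro k hk
    have hk2 : k ≤ m - 2 := by simp at hk; omega
    rw [bin_nat hk2, bb]
    have : m - 1 - k = (m - 2 - k) + 1 := by omega
    rw [this, pow_succ]
    ring
  · intro k hk1 hk2
    have : ¬((k:ℤ) ≤ ((m-2:ℕ):ℤ)) := by
      simp at hk1 hk2
      omega
    rw [bin_zero (by tauto)]
    ring

lemma sumB {m : ℕ} (hm : 2 ≤ m) (x : ℝ) (w : ℕ → ℝ) :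
    ∑ k ∈ Finset.range (m+2), bin (m-2) ((k:ℤ)-2) * x ^ (k-1) * (1-x) ^ (m-k) * w k
      = x * ∑ j ∈ Finset.range (m-1), bb (m-2) j x * w (j+2) := by
  have h0 : ∀ (f : ℕ → ℝ), (∀ k, f k = bin (m-2) ((k:ℤ)-2) * x ^ (k-1) * (1-x) ^ (m-k) * w k) →
      ∑ k ∈ Finset.range (m+2), f k = ∑ j ∈ Finset.range m, f (j+2) + f 1 + f 0 := by
    intro f _
    rw [Finset.sum_range_succ' f (m+1), Finset.sum_range_succ' (fun i => f (i+1)) m]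
  set f : ℕ → ℝ := fun k => bin (m-2) ((k:ℤ)-2) * x ^ (k-1) * (1-x) ^ (m-k) * w k with hf
  rw [h0 f (fun k => rfl)]
  have hf0 : f 0 = 0 := by
    simp only [hf]
    rw [bin_zero (by norm_num)]
    ring
  have hf1 : f 1 = 0 := by
    simp only [hf]
    rw [bin_zero (by norm_num)]
    ring
  have hsplit : ∑ j ∈ Finset.range m, f (j+2)
      = ∑ j ∈ Finset.range (m-1), f (j+2) + f (m+1) := by
    have h := Finset.sum_range_succ (fun j => f (j+2)) (m-1)
    rw [show m - 1 + 1 = m from by omega, show m - 1 + 2 = m + 1 from by omega] at h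
    exact h
  have hftop : f (m+1) = 0 := by
    simp only [hf]
    rw [bin_zero (by push_cast; omega)]
    ring
  rw [hsplit, hftop, hf0, hf1, add_zero, add_zero, add_zero, Finset.mul_sum]
  apply Finset.sum_congr rfl
  intro j hj
  simp only [hf]
  have hj2 : j ≤ m - 2 := by simp at hj; omega
  have e1 : ((j+2:ℕ):ℤ) - 2 = (j:ℤ) := by push_cast; ring
  rw [e1, bin_nat hj2, bb]
  have e2 : j + 2 - 1 = j + 1 := by omega
  have e3 : m - (j+2) = m - 2 - j := by omega
  rw [e2, e3, pow_succ]
  ring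

lemma sumC {m : ℕ} (x : ℝ) (w : ℕ → ℝ) :
    ∑ k ∈ Finset.range (m+2), bin m (k:ℤ) * x ^ k * (1-x) ^ (m-k) * w k
      = ∑ k ∈ Finset.range (m+1), bb m k x * w k := by
  rw [Finset.sum_range_succ]
  have htop : bin m ((m+1:ℕ):ℤ) = 0 := by
    apply bin_zero; push_cast; omega
  rw [htop]
  rw [zero_mul, zero_mul, zero_mul, add_zero]
  apply Finset.sum_congr rfl
  intro k hk
  have hk2 : k ≤ m := by simp at hk; omega
  rw [bin_nat hk2, bb]

lemma bp_eq {α x : ℝ} {m : ℕ} (hm : 2 ≤ m) (k : ℕ) :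
    bp α m (k:ℤ) x = (1-α) * (bin (m-2) (k:ℤ) * x ^ k * (1-x) ^ (m-1-k))
      + (1-α) * (bin (m-2) ((k:ℤ)-2) * x ^ (k-1) * (1-x) ^ (m-k))
      + α * (bin m (k:ℤ) * x ^ k * (1-x) ^ (m-k)) := by
  rw [bp, if_neg (by omega : ¬ m = 1)]
  simp only [Int.toNat_natCast]
  ring

lemma bp_nonneg {α x : ℝ} {m : ℕ} (hm : 1 ≤ m) (hα : α ∈ Set.Icc (0:ℝ) 1)
    (hx : x ∈ Set.Icc (0:ℝ) 1) (k : ℤ) : 0 ≤ bp α m k x := by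
  rcases eq_or_lt_of_le hm with h1 | h2
  · rw [bp, if_pos h1.symm]
    split
    · linarith [hx.2]
    · split
      · exact hx.1
      · exact le_refl 0
  · have h1x : (0:ℝ) ≤ 1 - x := by linarith [hx.2]
    rw [bp, if_neg (by omega : ¬ m = 1)]
    have t1 : (0:ℝ) ≤ 1 - α := by linarith [hα.2]
    have p : ∀ (M : ℕ) (j : ℤ) (a b : ℕ), 0 ≤ bin M j * x ^ a * (1-x) ^ b :=
      fun M j a b => mul_nonneg (mul_nonneg (bin_nonneg M j) (pow_nonneg hx.1 a))
        (pow_nonneg h1x b)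
    have := p (m-2) (k:ℤ) k.toNat (m-1-k.toNat)
    have := p (m-2) ((k:ℤ)-2) (k.toNat-1) (m-k.toNat)
    have := p m k k.toNat (m-k.toNat)
    nlinarith [hα.1, p (m-2) k k.toNat (m-1-k.toNat), p (m-2) (k-2) (k.toNat-1) (m-k.toNat),
      p m k k.toNat (m-k.toNat)]

lemma bp_sum_one {α x : ℝ} {m : ℕ} (hm : 1 ≤ m) :
    ∑ k ∈ Finset.range (m+2), bp α m (k:ℤ) x = 1 := by
  rcases eq_or_lt_of_le hm with h1 | h2
  · subst h1
    simp [Finset.sum_range_succ, bp]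
  · have hm2 : 2 ≤ m := h2
    have expand : ∀ k : ℕ, bp α m (k:ℤ) x
        = (1-α) * (bin (m-2) (k:ℤ) * x ^ k * (1-x) ^ (m-1-k) * 1)
          + (1-α) * (bin (m-2) ((k:ℤ)-2) * x ^ (k-1) * (1-x) ^ (m-k) * 1)
          + α * (bin m (k:ℤ) * x ^ k * (1-x) ^ (m-k) * 1) := by
      intro k
      rw [bp_eq hm2 k]
      ring
    rw [Finset.sum_congr rfl fun k _ => expand k]
    rw [Finset.sum_add_distrib, Finset.sum_add_distrib, ← Finset.mul_sum, ← Finset.mul_sum,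
      ← Finset.mul_sum, sumA hm2 x (fun _ => 1), sumB hm2 x (fun _ => 1), sumC x (fun _ => 1)]
    simp only [mul_one]
    rw [show m - 1 = (m-2)+1 from by omega, bb_sum (m-2), bb_sum m]
    ring

set_option maxHeartbeats 1000000 in
lemma bp_sq_sum {α x c : ℝ} {m : ℕ} (hm : 1 ≤ m) (hα : α ∈ Set.Icc (0:ℝ) 1)
    (hx : x ∈ Set.Icc (0:ℝ) 1) (hc : |c - ((m:ℝ)+1)*x| ≤ 2) :
    ∑ k ∈ Finset.range (m+2), bp α m (k:ℤ) x * (c - (k:ℝ))^2 ≤ 25*((m:ℝ)+1) := by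
  obtain ⟨hc1, hc2⟩ := abs_le.mp hc
  rcases eq_or_lt_of_le hm with h1 | h2
  · subst h1
    rw [show (1:ℕ)+2 = 3 from rfl, Finset.sum_range_succ, Finset.sum_range_succ,
      Finset.sum_range_succ, Finset.sum_range_zero]
    norm_num [bp]
    push_cast at hc1 hc2
    nlinarith [hx.1, hx.2, sq_nonneg (c-1), sq_nonneg c]
  · have hm2 : 2 ≤ m := h2
    have hM2 : (2:ℝ) ≤ (m:ℝ) := by exact_mod_cast hm2
    have expand : ∀ k : ℕ, bp α m (k:ℤ) x * (c - (k:ℝ))^2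
        = (1-α) * (bin (m-2) (k:ℤ) * x ^ k * (1-x) ^ (m-1-k) * (c - (k:ℝ))^2)
          + (1-α) * (bin (m-2) ((k:ℤ)-2) * x ^ (k-1) * (1-x) ^ (m-k) * (c - (k:ℝ))^2)
          + α * (bin m (k:ℤ) * x ^ k * (1-x) ^ (m-k) * (c - (k:ℝ))^2) := by
      intro k
      rw [bp_eq hm2 k]
      ring
    rw [Finset.sum_congr rfl fun k _ => expand k]
    rw [Finset.sum_add_distrib, Finset.sum_add_distrib, ← Finset.mul_sum, ← Finset.mul_sum,
      ← Finset.mul_sum, sumA hm2 x (fun k => (c - (k:ℝ))^2), sumB hm2 x (fun k => (c - (k:ℝ))^2),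
      sumC x (fun k => (c - (k:ℝ))^2)]
    have cast2 : ∀ j : ℕ, (c - ((j+2:ℕ):ℝ))^2 = ((c-2) - (j:ℝ))^2 := by
      intro j; push_cast; ring
    have hB2 : ∑ j ∈ Finset.range (m-1), bb (m-2) j x * (c - ((j+2:ℕ):ℝ))^2
        = ∑ j ∈ Finset.range (m-1), bb (m-2) j x * ((c-2) - (j:ℝ))^2 :=
      Finset.sum_congr rfl fun j _ => by rw [cast2 j]
    rw [hB2, show m - 1 = (m-2)+1 from by omega, bb_var (m-2) x c, bb_var (m-2) x (c-2),
      bb_var m x c]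
    have hcast : ((m-2:ℕ):ℝ) = (m:ℝ) - 2 := by
      push_cast [Nat.cast_sub hm2]
      ring
    rw [hcast]
    obtain ⟨hx0, hx1⟩ := hx
    obtain ⟨ha0, ha1⟩ := hα
    have hxx : x*(1-x) ≤ 1 := by nlinarith
    have hV1 : (c - ((m:ℝ)-2)*x)^2 + ((m:ℝ)-2)*x*(1-x) ≤ 25 + (m:ℝ) := by
      have u1 : c - ((m:ℝ)-2)*x ≤ 5 := by nlinarith
      have u2 : -5 ≤ c - ((m:ℝ)-2)*x := by nlinarith
      nlinarith [mul_nonneg (mul_nonneg (by linarith : (0:ℝ) ≤ (m:ℝ)-2) hx0) (by linarith : (0:ℝ) ≤ 1-x),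
        mul_le_mul_of_nonneg_left hxx (by linarith : (0:ℝ) ≤ (m:ℝ)-2)]
    have hV2 : ((c-2) - ((m:ℝ)-2)*x)^2 + ((m:ℝ)-2)*x*(1-x) ≤ 25 + (m:ℝ) := by
      have u1 : (c-2) - ((m:ℝ)-2)*x ≤ 3 := by nlinarith
      have u2 : -5 ≤ (c-2) - ((m:ℝ)-2)*x := by nlinarith
      nlinarith [mul_le_mul_of_nonneg_left hxx (by linarith : (0:ℝ) ≤ (m:ℝ)-2)]
    have hV3 : (c - (m:ℝ)*x)^2 + (m:ℝ)*x*(1-x) ≤ 25 + (m:ℝ) := by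
      have u1 : c - (m:ℝ)*x ≤ 3 := by nlinarith
      have u2 : -3 ≤ c - (m:ℝ)*x := by nlinarith
      nlinarith [mul_le_mul_of_nonneg_left hxx (by linarith : (0:ℝ) ≤ (m:ℝ))]
    have step : (1-x) * ((c - ((m:ℝ)-2)*x)^2 + ((m:ℝ)-2)*x*(1-x))
        + x * (((c-2) - ((m:ℝ)-2)*x)^2 + ((m:ℝ)-2)*x*(1-x)) ≤ 25 + (m:ℝ) := by
      nlinarith [mul_le_mul_of_nonneg_left hV1 (by linarith : (0:ℝ) ≤ 1-x),
        mul_le_mul_of_nonneg_left hV2 hx0]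
    have final : (1-α) * ((1-x) * ((c - ((m:ℝ)-2)*x)^2 + ((m:ℝ)-2)*x*(1-x))
        + x * (((c-2) - ((m:ℝ)-2)*x)^2 + ((m:ℝ)-2)*x*(1-x)))
        + α * ((c - (m:ℝ)*x)^2 + (m:ℝ)*x*(1-x)) ≤ 25 + (m:ℝ) := by
      nlinarith [mul_le_mul_of_nonneg_left step (by linarith : (0:ℝ) ≤ 1-α),
        mul_le_mul_of_nonneg_left hV3 ha0]
    linarith

lemma bp_neg_one {α x : ℝ} {m : ℕ} (hm : 1 ≤ m) : bp α m (-1) x = 0 := by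
  rcases eq_or_lt_of_le hm with h1 | h2
  · rw [bp, if_pos h1.symm]
    norm_num
  · rw [bp, if_neg (by omega : ¬ m = 1)]
    rw [bin_zero (by norm_num), bin_zero (by norm_num), bin_zero (by norm_num)]
    ring

lemma bp_top {α x : ℝ} {m : ℕ} (hm : 1 ≤ m) : bp α m ((m+1:ℕ):ℤ) x = 0 := by
  rcases eq_or_lt_of_le hm with h1 | h2
  · rw [bp, if_pos h1.symm]
    subst h1
    norm_num
  · rw [bp, if_neg (by omega : ¬ m = 1)]
    rw [bin_zero (by push_cast; omega), bin_zero (by push_cast; omega),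
      bin_zero (by push_cast; omega)]
    ring

lemma bp_sum_one' {α x : ℝ} {m : ℕ} (hm : 1 ≤ m) :
    ∑ k ∈ Finset.range (m+1), bp α m (k:ℤ) x = 1 := by
  have h := bp_sum_one (α := α) (x := x) hm
  rw [Finset.sum_range_succ, bp_top hm, add_zero] at h
  exact h

lemma bp_shift_sum {α x : ℝ} {m : ℕ} (hm : 1 ≤ m) :
    ∑ k ∈ Finset.range (m+2), bp α m ((k:ℤ)-1) x = 1 := by
  rw [Finset.sum_range_succ' (fun k => bp α m ((k:ℤ)-1) x) (m+1)]
  simp only [Nat.cast_add, Nat.cast_one, Nat.cast_zero]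
  rw [show (0:ℤ) - 1 = -1 from by ring, bp_neg_one hm]
  have e : ∀ i : ℕ, (i:ℤ) + 1 - 1 = (i:ℤ) := fun i => by ring
  rw [Finset.sum_congr rfl fun i _ => by rw [e i]]
  rw [bp_sum_one' hm, add_zero]

lemma bp_shift_sq {α x c : ℝ} {m : ℕ} (hm : 1 ≤ m) (hα : α ∈ Set.Icc (0:ℝ) 1)
    (hx : x ∈ Set.Icc (0:ℝ) 1) (hc : |c - ((m:ℝ)+1)*x| ≤ 1) :
    ∑ k ∈ Finset.range (m+2), bp α m ((k:ℤ)-1) x * (c - (k:ℝ))^2 ≤ 25*((m:ℝ)+1) := by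
  rw [Finset.sum_range_succ' (fun k => bp α m ((k:ℤ)-1) x * (c - (k:ℝ))^2) (m+1)]
  simp only [Nat.cast_add, Nat.cast_one, Nat.cast_zero]
  rw [show (0:ℤ) - 1 = -1 from by ring, bp_neg_one hm, zero_mul, add_zero]
  have e : ∀ i : ℕ, (i:ℤ) + 1 - 1 = (i:ℤ) := fun i => by ring
  have e2 : ∀ i : ℕ, (c - ((i:ℝ) + 1))^2 = ((c-1) - (i:ℝ))^2 := fun i => by ring
  rw [Finset.sum_congr rfl fun i _ => by rw [e i, e2 i]]
  have hc' : |(c-1) - ((m:ℝ)+1)*x| ≤ 2 := by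
    have := abs_le.mp hc
    rw [abs_le]
    constructor <;> [linarith [this.1]; linarith [this.2]]
  have key := bp_sq_sum (c := c - 1) hm hα hx hc'
  rw [Finset.sum_range_succ, bp_top hm, zero_mul, add_zero] at key
  exact key
lemma pal_intInt {ρ : ℝ} (hρ : 0 < ρ) {n k : ℕ} (hk : k ≤ n) {g : ℝ → ℝ}
    (hg : ContinuousOn g (Set.Icc 0 1)) :
    IntervalIntegrable (fun t => pal ρ n k t * g t) volume 0 1 := by
  apply ContinuousOn.intervalIntegrable
  rw [Set.uIcc_of_le (by norm_num : (0:ℝ) ≤ 1)]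
  exact (pal_contOn hρ hk).mul hg


lemma pal_sq_moment {ρ : ℝ} (hρ : 0 < ρ) {n k : ℕ} (hk : k ≤ n) (hn : 2 ≤ n)
    {x : ℝ} (hx : x ∈ Set.Icc (0:ℝ) 1) :
    ∫ t in (0:ℝ)..1, pal ρ n k t * (t - x) ^ 2
      ≤ 2 * (x - (k:ℝ)/(n:ℝ)) ^ 2 + (2/ρ^2 + 1/ρ) / (n:ℝ) := by
  have hN : (2:ℝ) ≤ (n:ℝ) := by exact_mod_cast hn
  have hK0 : (0:ℝ) ≤ (k:ℝ) := Nat.cast_nonneg k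
  have hKN : (k:ℝ) ≤ (n:ℝ) := by exact_mod_cast hk
  have hi0 : IntervalIntegrable (pal ρ n k) volume 0 1 := by
    have := pal_intInt hρ hk (g := fun _ => (1:ℝ)) continuousOn_const
    simpa using this
  have hi1 : IntervalIntegrable (fun t => pal ρ n k t * t) volume 0 1 :=
    pal_intInt hρ hk (continuous_id.continuousOn)
  have hi2 : IntervalIntegrable (fun t => pal ρ n k t * t ^ 2) volume 0 1 :=
    pal_intInt hρ hk (by fun_prop)
  have split : ∫ t in (0:ℝ)..1, pal ρ n k t * (t - x) ^ 2
      = (∫ t in (0:ℝ)..1, pal ρ n k t * t ^ 2)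
        - 2 * x * (∫ t in (0:ℝ)..1, pal ρ n k t * t)
        + x ^ 2 * (∫ t in (0:ℝ)..1, pal ρ n k t) := by
    rw [← intervalIntegral.integral_const_mul, ← intervalIntegral.integral_const_mul,
      ← intervalIntegral.integral_sub hi2 (by exact hi1.const_mul _),
      ← intervalIntegral.integral_add (by exact hi2.sub (hi1.const_mul _)) (by exact hi0.const_mul _)]
    apply intervalIntegral.integral_congr
    intro t _
    ring
  rw [split, pal_int0 hρ hk, pal_int1 hρ hk, pal_int2 hρ hk, mul_one]
  have := arith_key (x := x) hρ hN hK0 hKN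
  linarith

lemma holder_contOn {f : ℝ → ℝ} {L τ : ℝ} (hL : 0 < L) (hτ : 0 < τ)
    (hf : ∀ x1 ∈ Set.Icc (0:ℝ) 1, ∀ x2 ∈ Set.Icc (0:ℝ) 1,
      |f x1 - f x2| ≤ L * |x1 - x2| ^ τ) :
    ContinuousOn f (Set.Icc (0:ℝ) 1) := by
  intro x hx
  rw [Metric.continuousWithinAt_iff]
  intro ε hε
  refine ⟨(ε/(2*L)) ^ (1/τ), by positivity, ?_⟩
  intro y hy hdist
  have h1 : |f y - f x| ≤ L * |y - x| ^ τ := hf y hy x hx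
  have h2 : |y - x| ^ τ ≤ ((ε/(2*L)) ^ (1/τ)) ^ τ := by
    apply Real.rpow_le_rpow (abs_nonneg _) _ hτ.le
    rw [Real.dist_eq] at hdist
    exact hdist.le
  have h3 : ((ε/(2*L)) ^ (1/τ)) ^ τ = ε/(2*L) := by
    rw [← Real.rpow_mul (by positivity), one_div, inv_mul_cancel₀ hτ.ne', Real.rpow_one]
  rw [h3] at h2
  rw [Real.dist_eq]
  calc |f y - f x| ≤ L * |y - x| ^ τ := h1
    _ ≤ L * (ε/(2*L)) := by exact mul_le_mul_of_nonneg_left h2 hL.le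
    _ = ε/2 := by field_simp
    _ < ε := by linarith

lemma rpow_tau_bound {r τ : ℝ} (hr : 0 ≤ r) (hτ : 0 < τ) (hτ1 : τ ≤ 1) :
    r ^ τ ≤ 1 + r^2 := by
  rcases le_or_gt r 1 with h | h
  · have := Real.rpow_le_one hr h hτ.le
    nlinarith [sq_nonneg r]
  · calc r ^ τ ≤ r ^ (1:ℝ) := Real.rpow_le_rpow_of_exponent_le h.le hτ1
      _ = r := Real.rpow_one r
      _ ≤ 1 + r^2 := by nlinarith

lemma point_bound {t x : ℝ} {n : ℕ} (hn : 2 ≤ n) {τ : ℝ} (hτ : 0 < τ) (hτ1 : τ ≤ 1) :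
    |t - x| ^ τ ≤ (n:ℝ) ^ (-(τ/2)) * (1 + (n:ℝ)*(t-x)^2) := by
  have hn0 : (0:ℝ) < n := by positivity
  set r := Real.sqrt n * |t - x| with hr
  have hr0 : 0 ≤ r := mul_nonneg (Real.sqrt_nonneg _) (abs_nonneg _)
  have key : |t - x| = (n:ℝ) ^ (-(1/2) : ℝ) * r := by
    rw [hr, ← mul_assoc, Real.sqrt_eq_rpow, ← Real.rpow_add hn0]
    norm_num
  have hpow : (0:ℝ) ≤ (n:ℝ) ^ (-(1/2) : ℝ) := (Real.rpow_pos_of_pos hn0 _).le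
  calc |t - x| ^ τ = ((n:ℝ) ^ (-(1/2) : ℝ)) ^ τ * r ^ τ := by
        rw [key, Real.mul_rpow hpow hr0]
    _ = (n:ℝ) ^ (-(τ/2)) * r ^ τ := by
        rw [← Real.rpow_mul hn0.le, show (-(1/2) : ℝ) * τ = -(τ/2) by ring]
    _ ≤ (n:ℝ) ^ (-(τ/2)) * (1 + r^2) :=
        mul_le_mul_of_nonneg_left (rpow_tau_bound hr0 hτ hτ1) (Real.rpow_pos_of_pos hn0 _).le
    _ = (n:ℝ) ^ (-(τ/2)) * (1 + (n:ℝ)*(t-x)^2) := by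
        rw [hr, mul_pow, Real.sq_sqrt hn0.le, sq_abs]

set_option maxHeartbeats 2000000 in
theorem stmt_10 (α ρ : ℝ) (hα : α ∈ Set.Icc (0:ℝ) 1) (hρ : 0 < ρ)
    (a0 a1 : ℕ → ℝ) (hsum : ∀ n, 2 * a0 n + a1 n = 1)
    (hbdd : ∃ M : ℝ, ∀ n, |a0 n| ≤ M) :
    ∃ C3 > (0:ℝ), ∀ τ : ℝ, 0 < τ → τ ≤ 1 → ∀ L : ℝ, 0 < L → ∀ f : ℝ → ℝ,
      (∀ x1 ∈ Set.Icc (0:ℝ) 1, ∀ x2 ∈ Set.Icc (0:ℝ) 1,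
        |f x1 - f x2| ≤ L * |x1 - x2| ^ τ) →
      ∀ n : ℕ, 2 ≤ n → ∀ x ∈ Set.Icc (0:ℝ) 1,
        |J1 α ρ a0 a1 n f x - f x|
          ≤ L * C3 * (1 + 3 * |a0 n|) * (n : ℝ) ^ (-(τ / 2)) := by
  have hCρpos : 0 < 2/ρ^2 + 1/ρ := by positivity
  refine ⟨102 + 2*(2/ρ^2 + 1/ρ), by positivity, ?_⟩
  intro τ hτ hτ1 L hL f hf n hn x hx
  set Cρ := 2/ρ^2 + 1/ρ with hCρdef
  have hm : 1 ≤ n - 1 := by omega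
  have hrange : n + 1 = (n-1) + 2 := by omega
  have hNR : ((n:ℝ)) = ((n-1:ℕ):ℝ) + 1 := by
    rw [show n = (n-1) + 1 from by omega]
    push_cast
    ring
  have hn0 : (0:ℝ) < n := by positivity
  have hfc : ContinuousOn f (Set.Icc 0 1) := holder_contOn hL hτ hf
  set A := |a0 n| with hA
  have hA0 : 0 ≤ A := abs_nonneg _
  set c := (n:ℝ) ^ (-(τ/2)) with hcdef
  have hcpos : 0 < c := Real.rpow_pos_of_pos hn0 _
  set w : ℕ → ℝ := fun k => (a1 n * x + a0 n) * bp α (n-1) (k:ℤ) x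
    + (a1 n * (1-x) + a0 n) * bp α (n-1) ((k:ℤ)-1) x with hw
  set g : ℕ → ℝ := fun k => bp α (n-1) (k:ℤ) x + bp α (n-1) ((k:ℤ)-1) x with hg
  set D : ℕ → ℝ := fun k => ∫ t in (0:ℝ)..1, pal ρ n k t * (f t - f x) with hD
  set Q : ℕ → ℝ := fun k => ∫ t in (0:ℝ)..1, pal ρ n k t * (t - x)^2 with hQ
  have hg0 : ∀ k : ℕ, 0 ≤ g k := fun k =>
    add_nonneg (bp_nonneg hm hα hx _) (bp_nonneg hm hα hx _)
  -- sum of weights is 1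
  have sum_w : ∑ k ∈ Finset.range (n+1), w k = 1 := by
    rw [hrange]
    simp only [hw]
    rw [Finset.sum_add_distrib, ← Finset.mul_sum, ← Finset.mul_sum,
      bp_sum_one hm, bp_shift_sum hm]
    have := hsum n
    ring_nf
    linarith
  -- rewrite the error as a sum
  have step_eq : J1 α ρ a0 a1 n f x - f x = ∑ k ∈ Finset.range (n+1), w k * D k := by
    have hJ : J1 α ρ a0 a1 n f x
        = ∑ k ∈ Finset.range (n+1), w k * ∫ t in (0:ℝ)..1, pal ρ n k t * f t := rfl
    rw [hJ, show f x = (∑ k ∈ Finset.range (n+1), w k) * f x by rw [sum_w]; ring,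
      Finset.sum_mul, ← Finset.sum_sub_distrib]
    apply Finset.sum_congr rfl
    intro k hk
    have hkn : k ≤ n := by simp at hk; omega
    have hDk : D k = (∫ t in (0:ℝ)..1, pal ρ n k t * f t) - f x := by
      have e1 : ∀ t ∈ Set.uIcc (0:ℝ) 1, pal ρ n k t * (f t - f x)
          = pal ρ n k t * f t - f x * pal ρ n k t := fun t _ => by ring
      simp only [hD]
      rw [intervalIntegral.integral_congr e1,
        intervalIntegral.integral_sub (pal_intInt hρ hkn hfc)
          (by simpa [mul_comm] using (pal_intInt hρ hkn (continuousOn_const (c := f x)))),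
        intervalIntegral.integral_const_mul, pal_int0 hρ hkn, mul_one]
    rw [hDk]
    ring
  -- bound on each D k
  have hDk_bd : ∀ k ≤ n, |D k| ≤ L * c * (1 + (n:ℝ) * Q k) := by
    intro k hkn
    have int_abs : IntervalIntegrable (fun t => pal ρ n k t * |f t - f x|) volume 0 1 :=
      pal_intInt hρ hkn ((hfc.sub continuousOn_const).abs)
    have int_rhs : IntervalIntegrable
        (fun t => pal ρ n k t * (L * (c * (1 + (n:ℝ)*(t-x)^2)))) volume 0 1 :=
      pal_intInt hρ hkn (by fun_prop)
    have step1 : |D k| ≤ ∫ t in (0:ℝ)..1, pal ρ n k t * |f t - f x| := by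
      have h1 := intervalIntegral.abs_integral_le_integral_abs (μ := volume)
        (f := fun t => pal ρ n k t * (f t - f x)) (a := 0) (b := 1) zero_le_one
      have h2 : ∀ t ∈ Set.uIcc (0:ℝ) 1, |pal ρ n k t * (f t - f x)|
          = pal ρ n k t * |f t - f x| := by
        intro t ht
        rw [Set.uIcc_of_le zero_le_one] at ht
        rw [abs_mul, abs_of_nonneg (pal_nonneg hρ hkn ht)]
      rw [intervalIntegral.integral_congr h2] at h1
      exact h1
    have step2 : (∫ t in (0:ℝ)..1, pal ρ n k t * |f t - f x|)
        ≤ ∫ t in (0:ℝ)..1, pal ρ n k t * (L * (c * (1 + (n:ℝ)*(t-x)^2))) := by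
      apply intervalIntegral.integral_mono_on zero_le_one int_abs int_rhs
      intro t ht
      apply mul_le_mul_of_nonneg_left _ (pal_nonneg hρ hkn ht)
      calc |f t - f x| ≤ L * |t - x| ^ τ := hf t ht x hx
        _ ≤ L * (c * (1 + (n:ℝ)*(t-x)^2)) :=
            mul_le_mul_of_nonneg_left (point_bound hn hτ hτ1) hL.le
    have step3 : (∫ t in (0:ℝ)..1, pal ρ n k t * (L * (c * (1 + (n:ℝ)*(t-x)^2))))
        = L * c * (1 + (n:ℝ) * Q k) := by
      have e1 : ∀ t ∈ Set.uIcc (0:ℝ) 1, pal ρ n k t * (L * (c * (1 + (n:ℝ)*(t-x)^2)))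
          = (L*c) * pal ρ n k t + (L*c*(n:ℝ)) * (pal ρ n k t * (t-x)^2) := fun t _ => by ring
      have ipal : IntervalIntegrable (pal ρ n k) volume 0 1 := by
        have h := pal_intInt hρ hkn (g := fun _ => (1:ℝ)) continuousOn_const
        simpa using h
      rw [intervalIntegral.integral_congr e1,
        intervalIntegral.integral_add (ipal.const_mul (L*c))
          ((pal_intInt hρ hkn (by fun_prop)).const_mul (L*c*(n:ℝ))),
        intervalIntegral.integral_const_mul, intervalIntegral.integral_const_mul,
        pal_int0 hρ hkn]
      simp only [hQ]
      ring
    calc |D k| ≤ _ := step1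
      _ ≤ _ := step2
      _ = _ := step3
  -- bound on weights
  have ha1 : a1 n = 1 - 2 * a0 n := by linarith [hsum n]
  have hwb : ∀ k : ℕ, |w k| ≤ (1 + 3*A) * g k := by
    intro k
    have hyb : ∀ y : ℝ, 0 ≤ y → y ≤ 1 → |a1 n * y + a0 n| ≤ 1 + 3*A := by
      intro y hy0 hy1
      rw [ha1, abs_le]
      constructor
      · nlinarith [neg_abs_le (a0 n), le_abs_self (a0 n), abs_nonneg (a0 n)]
      · nlinarith [neg_abs_le (a0 n), le_abs_self (a0 n), abs_nonneg (a0 n)]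
    have b1 := bp_nonneg (α := α) (x := x) hm hα hx (k:ℤ)
    have b2 := bp_nonneg (α := α) (x := x) hm hα hx ((k:ℤ)-1)
    simp only [hw, hg]
    calc |(a1 n * x + a0 n) * bp α (n-1) (k:ℤ) x
          + (a1 n * (1-x) + a0 n) * bp α (n-1) ((k:ℤ)-1) x|
        ≤ |(a1 n * x + a0 n) * bp α (n-1) (k:ℤ) x|
          + |(a1 n * (1-x) + a0 n) * bp α (n-1) ((k:ℤ)-1) x| := abs_add_le _ _
      _ = |a1 n * x + a0 n| * bp α (n-1) (k:ℤ) x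
          + |a1 n * (1-x) + a0 n| * bp α (n-1) ((k:ℤ)-1) x := by
          rw [abs_mul, abs_mul, abs_of_nonneg b1, abs_of_nonneg b2]
      _ ≤ (1 + 3*A) * bp α (n-1) (k:ℤ) x + (1 + 3*A) * bp α (n-1) ((k:ℤ)-1) x := by
          apply add_le_add
          · exact mul_le_mul_of_nonneg_right (hyb x hx.1 hx.2) b1
          · exact mul_le_mul_of_nonneg_right (hyb (1-x) (by linarith [hx.2]) (by linarith [hx.1])) b2
      _ = (1 + 3*A) * (bp α (n-1) (k:ℤ) x + bp α (n-1) ((k:ℤ)-1) x) := by ring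
  -- per-k bound on 1 + n Q k
  have hQb : ∀ k ≤ n, 1 + (n:ℝ) * Q k ≤ (1 + Cρ) + (2/(n:ℝ)) * ((n:ℝ)*x - (k:ℝ))^2 := by
    intro k hkn
    have h1 := pal_sq_moment hρ hkn hn hx
    have h2 : (n:ℝ) * Q k ≤ (n:ℝ) * (2 * (x - (k:ℝ)/(n:ℝ))^2 + Cρ/(n:ℝ)) :=
      mul_le_mul_of_nonneg_left h1 hn0.le
    have e1 : (n:ℝ) * (2 * (x - (k:ℝ)/(n:ℝ))^2 + Cρ/(n:ℝ))
        = (2/(n:ℝ)) * ((n:ℝ)*x - (k:ℝ))^2 + Cρ := by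
      field_simp
    rw [e1] at h2
    linarith
  -- sums of g
  have sum_g : ∑ k ∈ Finset.range (n+1), g k = 2 := by
    rw [hrange]
    simp only [hg]
    rw [Finset.sum_add_distrib, bp_sum_one hm, bp_shift_sum hm]
    norm_num
  have sum_g2 : ∑ k ∈ Finset.range (n+1), g k * ((n:ℝ)*x - (k:ℝ))^2 ≤ 50 * (n:ℝ) := by
    rw [hrange]
    simp only [hg]
    have e : ∀ k : ℕ, (bp α (n-1) (k:ℤ) x + bp α (n-1) ((k:ℤ)-1) x) * ((n:ℝ)*x - (k:ℝ))^2
        = bp α (n-1) (k:ℤ) x * ((n:ℝ)*x - (k:ℝ))^2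
          + bp α (n-1) ((k:ℤ)-1) x * ((n:ℝ)*x - (k:ℝ))^2 := fun k => by ring
    rw [Finset.sum_congr rfl fun k _ => e k, Finset.sum_add_distrib]
    have hc2 : |(n:ℝ)*x - (((n-1:ℕ):ℝ)+1)*x| ≤ 2 := by
      rw [← hNR]
      simp
    have hc1 : |(n:ℝ)*x - (((n-1:ℕ):ℝ)+1)*x| ≤ 1 := by
      rw [← hNR]
      simp
    have s1 := bp_sq_sum (α := α) (x := x) (c := (n:ℝ)*x) hm hα hx hc2
    have s2 := bp_shift_sq (α := α) (x := x) (c := (n:ℝ)*x) hm hα hx hc1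
    have : 25*(((n-1:ℕ):ℝ)+1) + 25*(((n-1:ℕ):ℝ)+1) ≤ 50 * (n:ℝ) := by
      rw [← hNR]
      linarith
    linarith
  -- final chain
  rw [step_eq]
  calc |∑ k ∈ Finset.range (n+1), w k * D k|
      ≤ ∑ k ∈ Finset.range (n+1), |w k * D k| := Finset.abs_sum_le_sum_abs _ _
    _ ≤ ∑ k ∈ Finset.range (n+1),
        ((1 + 3*A) * L * c) * (g k * ((1 + Cρ) + (2/(n:ℝ)) * ((n:ℝ)*x - (k:ℝ))^2)) := by
        apply Finset.sum_le_sum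
        intro k hk
        have hkn : k ≤ n := by simp at hk; omega
        rw [abs_mul]
        calc |w k| * |D k| ≤ ((1 + 3*A) * g k) * (L * c * (1 + (n:ℝ) * Q k)) :=
              mul_le_mul (hwb k) (hDk_bd k hkn) (abs_nonneg _)
                (mul_nonneg (by linarith) (hg0 k))
          _ ≤ ((1 + 3*A) * g k) * (L * c * ((1 + Cρ) + (2/(n:ℝ)) * ((n:ℝ)*x - (k:ℝ))^2)) := by
              apply mul_le_mul_of_nonneg_left _ (mul_nonneg (by linarith) (hg0 k))
              exact mul_le_mul_of_nonneg_left (hQb k hkn) (by positivity)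
          _ = ((1 + 3*A) * L * c) * (g k * ((1 + Cρ) + (2/(n:ℝ)) * ((n:ℝ)*x - (k:ℝ))^2)) := by
              ring
    _ = ((1 + 3*A) * L * c) * ((1 + Cρ) * (∑ k ∈ Finset.range (n+1), g k)
          + (2/(n:ℝ)) * ∑ k ∈ Finset.range (n+1), g k * ((n:ℝ)*x - (k:ℝ))^2) := by
        rw [← Finset.mul_sum]
        congr 1
        rw [Finset.mul_sum, Finset.mul_sum, ← Finset.sum_add_distrib]
        apply Finset.sum_congr rfl
        intro k _
        ring
    _ ≤ ((1 + 3*A) * L * c) * ((1 + Cρ) * 2 + (2/(n:ℝ)) * (50 * (n:ℝ))) := by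
        apply mul_le_mul_of_nonneg_left _ (by positivity)
        rw [sum_g]
        have : (2/(n:ℝ)) * (∑ k ∈ Finset.range (n+1), g k * ((n:ℝ)*x - (k:ℝ))^2)
            ≤ (2/(n:ℝ)) * (50 * (n:ℝ)) := mul_le_mul_of_nonneg_left sum_g2 (by positivity)
        linarith
    _ = ((1 + 3*A) * L * c) * (102 + 2*Cρ) := by
        have : (2/(n:ℝ)) * (50 * (n:ℝ)) = 100 := by field_simp; ring
        rw [this]
        ring
    _ = L * (102 + 2*Cρ) * (1 + 3*A) * c := by ring
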